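/- Let r ∈ ℝ and k ∈ {0, 1, 2, 3, 4, 5}. The function v(w) = w^k · ₁F₅(k/6 − r; b_{k,1},…,b_{k,5}; −w⁶/6⁶), where (b_{k,1},…,b_{k,5}) is the list ( (k+1)/6, (k+2)/6, …, (k+6)/6 ) with the single entry equal to 1 removed, satisfies the sixth-order linear ordinary differential equation v⁽⁶⁾(w) + (1/6) w v′(w) − r v(w) = 0 for every w ∈ ℝ. -/

import Mathlib

/-- Pochhammer symbol (rising factorial) `(a)_k = a(a+1)⋯(a+k-1)`. -/
noncomputable def poch (a : ℝ) (k : ℕ) : ℝ := ∏ i ∈ Finset.range k, (a + (i : ℝ))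

/-- Generalized hypergeometric function `₁F_q(a; b₁,…,b_q; z)` with lower
parameters given by a list. -/
noncomputable def hypF (a : ℝ) (bs : List ℝ) (z : ℝ) : ℝ :=
  ∑' n : ℕ, poch a n / ((bs.map fun b => poch b n).prod) * z ^ n / (Nat.factorial n)

/-- The list `((k+1)/6, (k+2)/6, …, (k+6)/6)` with the single entry equal to `1` removed. -/
noncomputable def bParams (k : ℕ) : List ℝ :=
  ((List.range 6).map fun j => ((k : ℝ) + (j : ℝ) + 1) / 6).erase 1

/-- The solution `v_{k+1}(w) = w^k ₁F₅(k/6 - r; b_{k,1},…,b_{k,5}; -w⁶/6⁶)` of the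
similarity equation of the sixth-order corner-layer equation. -/
noncomputable def vSol (r : ℝ) (k : ℕ) (w : ℝ) : ℝ :=
  w ^ k * hypF ((k : ℝ) / 6 - r) (bParams k) (-w ^ 6 / 6 ^ 6)

namespace CLaux
open Filter

/-! ### Power series infrastructure -/

noncomputable def S (b : ℕ → ℝ) (w : ℝ) : ℝ := ∑' n, b n * w ^ n
noncomputable def Db (b : ℕ → ℝ) : ℕ → ℝ := fun n => ((n:ℝ) + 1) * b (n+1)
def Good (b : ℕ → ℝ) : Prop := ∀ R : ℝ, 0 ≤ R → Summable (fun n => |b n| * R ^ n)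

lemma nat_le_two_pow (n : ℕ) : ((n:ℝ)) ≤ 2 ^ n := by
  induction n with
  | zero => norm_num
  | succ m ih =>
    have h1 : (1:ℝ) ≤ 2 ^ m := one_le_pow₀ (by norm_num)
    push_cast
    rw [pow_succ]
    nlinarith

lemma Good.summable {b : ℕ → ℝ} (hb : Good b) (w : ℝ) : Summable (fun n => b n * w ^ n) := by
  apply Summable.of_norm
  refine (hb |w| (abs_nonneg w)).congr fun n => ?_
  rw [Real.norm_eq_abs, abs_mul, abs_pow]

lemma Good.natMul {b : ℕ → ℝ} (hb : Good b) : Good (fun n => (n:ℝ) * b n) := by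
  intro R hR
  refine Summable.of_nonneg_of_le
    (fun n => mul_nonneg (abs_nonneg _) (pow_nonneg hR _)) (fun n => ?_)
    (hb (2*(R+1)) (by linarith))
  have h1 : ((n:ℝ)) ≤ 2 ^ n := nat_le_two_pow n
  have h2 : R ^ n ≤ (R+1) ^ n := pow_le_pow_left₀ hR (by linarith) n
  have key : (n:ℝ) * R ^ n ≤ 2 ^ n * (R+1) ^ n :=
    mul_le_mul h1 h2 (pow_nonneg hR _) (by positivity)
  calc |(n:ℝ) * b n| * R ^ n = |b n| * ((n:ℝ) * R ^ n) := by
        rw [abs_mul, Nat.abs_cast]; ring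
    _ ≤ |b n| * (2 ^ n * (R+1) ^ n) :=
        mul_le_mul_of_nonneg_left key (abs_nonneg _)
    _ = |b n| * (2*(R+1)) ^ n := by rw [mul_pow]

lemma Good.constMul {b : ℕ → ℝ} (hb : Good b) (c : ℝ) : Good (fun n => c * b n) := by
  intro R hR
  have h := (hb R hR).mul_left |c|
  refine h.congr fun n => ?_
  rw [abs_mul]; ring

lemma Good.db {b : ℕ → ℝ} (hb : Good b) : Good (Db b) := by
  intro R hR
  have hs : Summable (fun n => |b (n+1)| * (2*(R+1)) ^ (n+1)) :=
    (summable_nat_add_iff (f := fun n => |b n| * (2*(R+1)) ^ n) 1).2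
      (hb (2*(R+1)) (by linarith))
  refine Summable.of_nonneg_of_le
    (fun n => mul_nonneg (abs_nonneg _) (pow_nonneg hR _)) (fun n => ?_) hs
  have h1 : ((n:ℝ)) + 1 ≤ 2 ^ (n+1) := by
    have := nat_le_two_pow (n+1); push_cast at this; linarith
  have h2 : R ^ n ≤ (R+1) ^ (n+1) :=
    le_trans (pow_le_pow_left₀ hR (by linarith) n)
      (pow_le_pow_right₀ (by linarith) (by omega))
  have hn1 : (0:ℝ) ≤ (n:ℝ) + 1 := by positivity
  have hD : Db b n = ((n:ℝ)+1) * b (n+1) := rfl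
  have key : ((n:ℝ)+1) * R ^ n ≤ 2 ^ (n+1) * (R+1) ^ (n+1) :=
    mul_le_mul h1 h2 (pow_nonneg hR _) (by positivity)
  calc |Db b n| * R ^ n = |b (n+1)| * (((n:ℝ)+1) * R ^ n) := by
        rw [hD, abs_mul, abs_of_nonneg hn1]; ring
    _ ≤ |b (n+1)| * (2 ^ (n+1) * (R+1) ^ (n+1)) :=
        mul_le_mul_of_nonneg_left key (abs_nonneg _)
    _ = |b (n+1)| * (2*(R+1)) ^ (n+1) := by rw [mul_pow]

lemma hasDerivAt_S {b : ℕ → ℝ} (hb : Good b) (w : ℝ) :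
    HasDerivAt (S b) (S (Db b) w) w := by
  set R : ℝ := |w| + 1 with hRdef
  have habs : (0:ℝ) ≤ |w| := abs_nonneg w
  have hR1 : (1:ℝ) ≤ R := by rw [hRdef]; linarith
  have hu : Summable (fun n : ℕ => (n:ℝ) * |b n| * R ^ n) := by
    refine (hb.natMul R (by linarith)).congr fun n => ?_
    rw [abs_mul, Nat.abs_cast]
  have hball : w ∈ Metric.ball (0:ℝ) R := by
    simp only [Metric.mem_ball, Real.dist_eq, sub_zero, hRdef]; linarith
  have hbound : ∀ (n : ℕ), ∀ y ∈ Metric.ball (0:ℝ) R,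
      ‖b n * ((n:ℝ) * y ^ (n-1))‖ ≤ (n:ℝ) * |b n| * R ^ n := by
    intro n y hy
    have hyR : |y| ≤ R := by
      simp only [Metric.mem_ball, Real.dist_eq, sub_zero] at hy; linarith
    have heq : ‖b n * ((n:ℝ) * y ^ (n-1))‖ = (n:ℝ) * |b n| * |y| ^ (n-1) := by
      rw [Real.norm_eq_abs, abs_mul, abs_mul, abs_pow, Nat.abs_cast]; ring
    rw [heq]
    have h3 : |y| ^ (n-1) ≤ R ^ n :=
      le_trans (pow_le_pow_left₀ (abs_nonneg y) hyR _)
        (pow_le_pow_right₀ hR1 (by omega))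
    have hnb : (0:ℝ) ≤ (n:ℝ) * |b n| := mul_nonneg (Nat.cast_nonneg n) (abs_nonneg _)
    exact mul_le_mul_of_nonneg_left h3 hnb
  have hD : HasDerivAt (fun z => ∑' n, b n * z ^ n)
      (∑' n, b n * ((n:ℝ) * w ^ (n-1))) w :=
    hasDerivAt_tsum_of_isPreconnected
      (g := fun n z => b n * z ^ n)
      (g' := fun n y => b n * ((n:ℝ) * y ^ (n-1)))
      hu Metric.isOpen_ball (convex_ball (0:ℝ) R).isPreconnected
      (fun n y _ => (hasDerivAt_pow n y).const_mul (b n)) hbound hball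
      (hb.summable w) hball
  have hsum : Summable (fun n => b n * ((n:ℝ) * w ^ (n-1))) :=
    Summable.of_norm_bounded hu (fun n => hbound n w hball)
  have heq : (∑' n, b n * ((n:ℝ) * w ^ (n-1))) = S (Db b) w := by
    rw [Summable.tsum_eq_zero_add hsum]
    simp only [Nat.cast_zero, zero_mul, mul_zero, zero_add, Nat.add_sub_cancel, S, Db]
    apply tsum_congr; intro n; push_cast; ring
  rw [heq] at hD
  exact hD

lemma deriv_S {b : ℕ → ℝ} (hb : Good b) : deriv (S b) = S (Db b) :=
  funext fun w => (hasDerivAt_S hb w).deriv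

lemma iteratedDeriv_S : ∀ (j : ℕ) {b : ℕ → ℝ}, Good b →
    iteratedDeriv j (S b) = S (Db^[j] b) := by
  intro j
  induction j with
  | zero => intro b _; simp
  | succ m ih =>
    intro b hb
    rw [iteratedDeriv_succ', deriv_S hb, ih hb.db, Function.iterate_succ_apply]

lemma Db_six (a : ℕ → ℝ) (n : ℕ) : (Db^[6] a) n =
    ((n:ℝ)+1)*((n:ℝ)+2)*((n:ℝ)+3)*((n:ℝ)+4)*((n:ℝ)+5)*((n:ℝ)+6) * a (n+6) := by
  have h : Db^[6] a = Db (Db (Db (Db (Db (Db a))))) := by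
    rw [show (6:ℕ) = 5+1 from rfl, Function.iterate_succ_apply,
        show (5:ℕ) = 4+1 from rfl, Function.iterate_succ_apply,
        show (4:ℕ) = 3+1 from rfl, Function.iterate_succ_apply,
        show (3:ℕ) = 2+1 from rfl, Function.iterate_succ_apply,
        show (2:ℕ) = 1+1 from rfl, Function.iterate_succ_apply,
        Function.iterate_one]
  rw [h]
  simp only [Db]
  rw [show n+1+1+1+1+1+1 = n+6 from rfl]
  push_cast
  ring

/-! ### Coefficients -/

noncomputable def Qp (k m : ℕ) : ℝ := ((bParams k).map fun b => poch b m).prod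
noncomputable def Rp (k m : ℕ) : ℝ := ((bParams k).map fun b => b + (m:ℝ)).prod
noncomputable def Cc (r : ℝ) (k m : ℕ) : ℝ :=
  poch ((k:ℝ)/6 - r) m / Qp k m * ((-1)/46656 : ℝ)^m / (Nat.factorial m)
noncomputable def ac (r : ℝ) (k : ℕ) : ℕ → ℝ :=
  fun n => if n % 6 = k then Cc r k ((n-k)/6) else 0

lemma poch_succ (a : ℝ) (m : ℕ) : poch a (m+1) = poch a m * (a + m) :=
  Finset.prod_range_succ _ _

lemma poch_pos {a : ℝ} (ha : 0 < a) (m : ℕ) : 0 < poch a m :=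
  Finset.prod_pos (fun i _ => by positivity)

lemma bParams_mem_pos {k : ℕ} {b : ℝ} (hb : b ∈ bParams k) : 0 < b := by
  have h := List.mem_of_mem_erase hb
  have hl : ((List.range 6).map fun j => ((k : ℝ) + (j : ℝ) + 1) / 6)
      = [((k:ℝ)+1)/6, ((k:ℝ)+2)/6, ((k:ℝ)+3)/6, ((k:ℝ)+4)/6, ((k:ℝ)+5)/6, ((k:ℝ)+6)/6] := by
    simp only [List.range_succ, List.range_zero, List.map, List.nil_append, List.cons_append]
    norm_num
    and_intros <;> ring
  rw [hl] at h
  have hk : (0:ℝ) ≤ (k:ℝ) := Nat.cast_nonneg _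
  simp only [List.mem_cons, List.not_mem_nil, or_false] at h
  rcases h with h|h|h|h|h|h <;> rw [h] <;> linarith

lemma Qp_pos (k m : ℕ) : 0 < Qp k m := by
  refine List.prod_pos fun x hx => ?_
  simp only [List.mem_map] at hx
  obtain ⟨b, hb, rfl⟩ := hx
  exact poch_pos (bParams_mem_pos hb) m

lemma Rp_pos (k m : ℕ) : 0 < Rp k m := by
  refine List.prod_pos fun x hx => ?_
  simp only [List.mem_map] at hx
  obtain ⟨b, hb, rfl⟩ := hx
  have := bParams_mem_pos hb
  positivity

lemma map_poch_succ (m : ℕ) : ∀ (l : List ℝ),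
    (l.map fun b => poch b (m+1)).prod
      = (l.map fun b => poch b m).prod * (l.map fun b => b + (m:ℝ)).prod := by
  intro l
  induction l with
  | nil => simp
  | cons x l ih =>
    rw [List.map_cons, List.map_cons, List.map_cons, List.prod_cons, List.prod_cons,
      List.prod_cons, ih, poch_succ]
    ring

lemma Qp_succ (k m : ℕ) : Qp k (m+1) = Qp k m * Rp k m := map_poch_succ m (bParams k)

lemma Rp_lb (k m : ℕ) (hk : k ≤ 5) : (m:ℝ)^5 ≤ Rp k m := by
  interval_cases k <;>
  · simp only [Rp, bParams, List.range_succ, List.range_zero, List.map, List.erase_cons,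
      beq_iff_eq, List.nil_append, List.cons_append, List.prod_cons, List.prod_nil]
    norm_num
    calc (m:ℝ)^5 = m*(m*(m*(m*m))) := by ring
      _ ≤ _ := by gcongr <;> norm_num

lemma prodId (k : ℕ) (hk : k ≤ 5) (m : ℕ) :
    (6*(m:ℝ)+k+1)*(6*(m:ℝ)+k+2)*(6*(m:ℝ)+k+3)*(6*(m:ℝ)+k+4)*(6*(m:ℝ)+k+5)*(6*(m:ℝ)+k+6)
      = 46656 * ((m:ℝ)+1) * Rp k m := by
  interval_cases k <;>
  · simp only [Rp, bParams, List.range_succ, List.range_zero, List.map, List.erase_cons,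
      beq_iff_eq, List.nil_append, List.cons_append, List.prod_cons, List.prod_nil]
    norm_num
    ring

lemma Crec (r : ℝ) (k m : ℕ) :
    Cc r k (m+1) * (46656 * ((m:ℝ)+1) * Rp k m)
      = Cc r k m * (-(((k:ℝ)/6 - r) + m)) := by
  have hQ : Qp k m ≠ 0 := ne_of_gt (Qp_pos k m)
  have hR0 : Rp k m ≠ 0 := ne_of_gt (Rp_pos k m)
  have hf : (Nat.factorial m : ℝ) ≠ 0 := Nat.cast_ne_zero.2 (Nat.factorial_ne_zero m)
  simp only [Cc, poch_succ, Qp_succ, pow_succ, Nat.factorial_succ, Nat.cast_mul,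
    Nat.cast_add, Nat.cast_one]
  field_simp

lemma ac_apply (r : ℝ) (k : ℕ) (hk : k ≤ 5) (m : ℕ) : ac r k (6*m+k) = Cc r k m := by
  have h1 : (6*m+k) % 6 = k := by omega
  have h2 : (6*m+k-k)/6 = m := by omega
  simp only [ac]
  rw [if_pos h1, h2]

lemma coeffRec (r : ℝ) (k : ℕ) (hk : k ≤ 5) (n : ℕ) :
    ((n:ℝ)+1)*((n:ℝ)+2)*((n:ℝ)+3)*((n:ℝ)+4)*((n:ℝ)+5)*((n:ℝ)+6) * ac r k (n+6)
      + ((n:ℝ)/6) * ac r k n - r * ac r k n = 0 := by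
  by_cases h : n % 6 = k
  · have hkn : k ≤ n := h ▸ Nat.mod_le n 6
    set m := (n - k)/6 with hm
    have hn : n = 6*m + k := by omega
    have h6 : n + 6 = 6*(m+1) + k := by omega
    have ha0 : ac r k n = Cc r k m := by rw [hn, ac_apply r k hk]
    have ha1 : ac r k (n+6) = Cc r k (m+1) := by rw [h6, ac_apply r k hk]
    have hcast : (n:ℝ) = 6*(m:ℝ) + k := by rw [hn]; push_cast; ring
    rw [ha0, ha1, hcast]
    have hrec := Crec r k m
    have hpid := prodId k hk m
    linear_combination Cc r k (m+1) * hpid + hrec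
  · have h6 : (n+6) % 6 ≠ k := by omega
    simp [ac, h, h6]

/-! ### `vSol` as a power series, and summability -/

lemma vSol_eq_S (r : ℝ) (k : ℕ) (hk : k ≤ 5) (w : ℝ) : vSol r k w = S (ac r k) w := by
  have hg : Function.Injective (fun m : ℕ => 6*m+k) := by
    intro x y hxy
    have : 6*x+k = 6*y+k := hxy
    omega
  have hsupp : Function.support (fun n => ac r k n * w^n)
      ⊆ Set.range (fun m : ℕ => 6*m+k) := by
    intro n hn
    by_cases h : n % 6 = k
    · exact ⟨(n-k)/6, show 6*((n-k)/6)+k = n by omega⟩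
    · exfalso; apply hn; simp [ac, h]
  have h1 : (∑' n : ℕ, ac r k n * w^n) = ∑' m : ℕ, ac r k (6*m+k) * w^(6*m+k) :=
    (Function.Injective.tsum_eq hg hsupp).symm
  rw [S, h1, vSol, hypF, ← tsum_mul_left]
  apply tsum_congr
  intro m
  rw [ac_apply r k hk]
  simp only [Cc, Qp]
  rw [show (-w^6/6^6 : ℝ) = (-1)/46656 * w^6 by norm_num; ring, mul_pow, pow_add, pow_mul]
  ring

lemma good_ac (r : ℝ) (k : ℕ) (hk : k ≤ 5) : Good (ac r k) := by
  intro R hR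
  set α : ℝ := (k:ℝ)/6 - r with hα
  have hg : Function.Injective (fun m : ℕ => 6*m+k) := by
    intro x y hxy
    have : 6*x+k = 6*y+k := hxy
    omega
  refine (Function.Injective.summable_iff hg (fun n hn => ?_)).1 ?_
  · by_cases h : n % 6 = k
    · exact absurd ⟨(n-k)/6, show 6*((n-k)/6)+k = n by omega⟩ hn
    · simp [ac, h]
  · refine summable_of_ratio_norm_eventually_le (r := 1/2) (by norm_num) ?_
    filter_upwards [Filter.eventually_ge_atTop (⌈max |α| (R^2+1)⌉₊ + 1)] with m hm
    have hm1 : 1 ≤ m := by omega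
    have hm1' : (1:ℝ) ≤ (m:ℝ) := by exact_mod_cast hm1
    have hmax : max |α| (R^2+1) ≤ (m:ℝ) := by
      calc max |α| (R^2+1) ≤ (⌈max |α| (R^2+1)⌉₊ : ℝ) := Nat.le_ceil _
        _ ≤ (m:ℝ) := by exact_mod_cast Nat.le_of_succ_le hm
    have hαm : |α| ≤ (m:ℝ) := le_trans (le_max_left _ _) hmax
    have hRm : R^2 + 1 ≤ (m:ℝ) := le_trans (le_max_right _ _) hmax
    have hco : ∀ j : ℕ, ((fun n => |ac r k n| * R^n) ∘ (fun m : ℕ => 6*m+k)) j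
        = |Cc r k j| * R^(6*j+k) := by
      intro j
      simp only [Function.comp_apply]
      rw [ac_apply r k hk]
    rw [hco, hco, Real.norm_eq_abs, Real.norm_eq_abs,
      abs_of_nonneg (mul_nonneg (abs_nonneg _) (pow_nonneg hR _)),
      abs_of_nonneg (mul_nonneg (abs_nonneg _) (pow_nonneg hR _))]
    set A : ℝ := 46656 * ((m:ℝ)+1) * Rp k m with hAdef
    have hRpos := Rp_pos k m
    have hA : 0 < A := by rw [hAdef]; positivity
    have hrec := Crec r k m
    rw [← hα, ← hAdef] at hrec
    have habs : |Cc r k (m+1)| * A = |Cc r k m| * |α + (m:ℝ)| := by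
      calc |Cc r k (m+1)| * A = |Cc r k (m+1) * A| := by rw [abs_mul, abs_of_pos hA]
        _ = |Cc r k m * (-(α + (m:ℝ)))| := by rw [hrec]
        _ = |Cc r k m| * |α + (m:ℝ)| := by rw [abs_mul, abs_neg]
    have hR6 : R^6 ≤ (m:ℝ)^3 := by
      have h2 : R^2 ≤ (m:ℝ) := by linarith
      calc R^6 = (R^2)^3 := by ring
        _ ≤ (m:ℝ)^3 := pow_le_pow_left₀ (sq_nonneg R) h2 3
    have hαm2 : |α + (m:ℝ)| ≤ 2*(m:ℝ) := by
      calc |α + (m:ℝ)| ≤ |α| + |(m:ℝ)| := abs_add_le _ _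
        _ = |α| + (m:ℝ) := by rw [Nat.abs_cast]
        _ ≤ 2*(m:ℝ) := by linarith
    have hRp : (m:ℝ)^5 ≤ Rp k m := Rp_lb k m hk
    have key : |Cc r k (m+1)| * R^6 ≤ 1/2 * |Cc r k m| := by
      refine le_of_mul_le_mul_right ?_ hA
      have hx : |Cc r k (m+1)| * R^6 * A = |Cc r k m| * (|α+(m:ℝ)| * R^6) := by
        linear_combination R^6 * habs
      rw [hx]
      have e1 : |α+(m:ℝ)| * R^6 ≤ 2*(m:ℝ)*(m:ℝ)^3 :=
        mul_le_mul hαm2 hR6 (by positivity) (by positivity)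
      have h45 : (m:ℝ)^4 ≤ (m:ℝ)^5 := pow_le_pow_right₀ hm1' (by norm_num)
      have e2 : 2*(m:ℝ)*(m:ℝ)^3 ≤ 1/2 * (46656*((m:ℝ)+1)*(m:ℝ)^5) := by
        nlinarith [h45, pow_nonneg (show (0:ℝ) ≤ (m:ℝ) by positivity) 5]
      have e3 : 1/2 * (46656*((m:ℝ)+1)*(m:ℝ)^5) ≤ 1/2 * A := by
        rw [hAdef]
        gcongr
      calc |Cc r k m| * (|α + (m:ℝ)| * R^6) ≤ |Cc r k m| * (1/2 * A) :=
            mul_le_mul_of_nonneg_left (by linarith) (abs_nonneg _)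
        _ = 1/2 * |Cc r k m| * A := by ring
    rw [show 6*(m+1)+k = 6+(6*m+k) from by omega, pow_add]
    calc |Cc r k (m+1)| * (R^6 * R^(6*m+k))
        = |Cc r k (m+1)| * R^6 * R^(6*m+k) := by ring
      _ ≤ 1/2 * |Cc r k m| * R^(6*m+k) :=
          mul_le_mul_of_nonneg_right key (pow_nonneg hR _)
      _ = 1/2 * (|Cc r k m| * R^(6*m+k)) := by ring

end CLaux

open CLaux in
/-- For `k = 0,…,5`, the function `v_{k+1}` satisfies the sixth-order ODE
`v⁽⁶⁾(w) + (1/6) w v'(w) - r v(w) = 0` for every `w ∈ ℝ`. -/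
theorem vSol_satisfies_similarity_ODE (r : ℝ) (k : ℕ) (hk : k ≤ 5) (w : ℝ) :
    iteratedDeriv 6 (vSol r k) w + 1/6 * w * deriv (vSol r k) w - r * vSol r k w = 0 := by
  have ha : Good (ac r k) := good_ac r k hk
  have hv : vSol r k = S (ac r k) := funext (vSol_eq_S r k hk)
  rw [hv, iteratedDeriv_S 6 ha, deriv_S ha]
  set a := ac r k with hadef
  have h1 : Good (Db a) := ha.db
  have h6 : Good (Db^[6] a) := ha.db.db.db.db.db.db
  have he : Good (fun n : ℕ => 1/6 * ((n:ℝ) * a n)) := (ha.natMul).constMul (1/6)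
  have hra : Good (fun n : ℕ => r * a n) := ha.constMul r
  have hmid : S (fun n : ℕ => 1/6 * ((n:ℝ) * a n)) w = 1/6 * w * S (Db a) w := by
    rw [S, Summable.tsum_eq_zero_add (he.summable w)]
    simp only [Nat.cast_zero, mul_zero, zero_mul, pow_zero, zero_add]
    rw [S, ← tsum_mul_left]
    apply tsum_congr
    intro n
    simp only [Db]
    push_cast
    ring
  have hr : r * S a w = S (fun n : ℕ => r * a n) w := by
    rw [S, S, ← tsum_mul_left]
    exact tsum_congr fun n => by ring
  rw [← hmid, hr, S, S, S, ← Summable.tsum_add (h6.summable w) (he.summable w),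
    ← Summable.tsum_sub ((h6.summable w).add (he.summable w)) (hra.summable w)]
  have hzero : ∀ n : ℕ,
      (Db^[6] a n * w^n + 1/6 * ((n:ℝ) * a n) * w^n) - r * a n * w^n = 0 := by
    intro n
    have h := coeffRec r k hk n
    rw [Db_six a n]
    rw [hadef]
    linear_combination w^n * h
  calc (∑' n : ℕ, ((Db^[6] a n * w^n + 1/6 * ((n:ℝ) * a n) * w^n) - r * a n * w^n))
      = ∑' _ : ℕ, (0:ℝ) := tsum_congr hzero
    _ = 0 := tsum_zero
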